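/- Let X be a nonempty set, Θ ⊆ ℝ a nondegenerate open interval, f : Θ → ℝ strictly increasing, p : X → (0,∞), φ : X → conv(f(Θ)), and define ψ(x,t) := p(x)(φ(x) − f(t)). Then for every n ≥ 1, (x₁,…,xₙ) ∈ Xⁿ and (λ₁,…,λₙ) ∈ Λₙ, the function t ↦ Σᵢ λᵢ ψ(xᵢ,t) has a point of sign change in Θ, and this point equals f^{(−1)}((Σᵢ λᵢ p(xᵢ) φ(xᵢ)) / (Σᵢ λᵢ p(xᵢ))), where f^{(−1)} : conv(f(Θ)) → Θ is the generalized left inverse of f. -/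

import Mathlib

open Set

/-- In ℝ, every point of the convex hull of `A` lies between two points of `A`. -/
lemma convexHull_between {A : Set ℝ} {y : ℝ} (hy : y ∈ convexHull ℝ A) :
    ∃ a ∈ A, ∃ b ∈ A, a ≤ y ∧ y ≤ b := by
  have hT : Convex ℝ {z : ℝ | ∃ a ∈ A, ∃ b ∈ A, a ≤ z ∧ z ≤ b} := by
    rintro z1 ⟨a1, ha1, b1, hb1, h1, h1'⟩ z2 ⟨a2, ha2, b2, hb2, h2, h2'⟩ u v hu hv huv
    refine ⟨min a1 a2, ?_, max b1 b2, ?_, ?_, ?_⟩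
    · rcases min_choice a1 a2 with h | h <;> rw [h] <;> assumption
    · rcases max_choice b1 b2 with h | h <;> rw [h] <;> assumption
    · have : u * min a1 a2 + v * min a1 a2 ≤ u * z1 + v * z2 := by
        gcongr <;> [exact le_trans (min_le_left _ _) h1; exact le_trans (min_le_right _ _) h2]
      have heq : u * min a1 a2 + v * min a1 a2 = min a1 a2 := by
        rw [← add_mul, huv, one_mul]
      calc min a1 a2 = u * min a1 a2 + v * min a1 a2 := heq.symm
        _ ≤ u * z1 + v * z2 := this
        _ = u • z1 + v • z2 := by simp [smul_eq_mul]
    · have : u * z1 + v * z2 ≤ u * max b1 b2 + v * max b1 b2 := by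
        gcongr <;> [exact le_trans h1' (le_max_left _ _); exact le_trans h2' (le_max_right _ _)]
      have heq : u * max b1 b2 + v * max b1 b2 = max b1 b2 := by
        rw [← add_mul, huv, one_mul]
      calc u • z1 + v • z2 = u * z1 + v * z2 := by simp [smul_eq_mul]
        _ ≤ u * max b1 b2 + v * max b1 b2 := this
        _ = max b1 b2 := heq
  exact convexHull_min (fun a ha =>
    mem_setOf.2 ⟨a, ha, a, ha, le_refl a, le_refl a⟩) hT hy

theorem stmt16 (X : Type*) [Nonempty X]
    (Θ : Set ℝ) (hopen : IsOpen Θ) (hconn : Θ.OrdConnected) (hnt : Θ.Nontrivial)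
    (f : ℝ → ℝ) (hf : StrictMonoOn f Θ)
    (p φ : X → ℝ) (hp : ∀ x, 0 < p x) (hφ : ∀ x, φ x ∈ convexHull ℝ (f '' Θ))
    (ψ : X → ℝ → ℝ) (hψ : ∀ x t, ψ x t = p x * (φ x - f t)) :
    ∀ n : ℕ, 1 ≤ n → ∀ x : Fin n → X, ∀ c : Fin n → ℝ, (∀ i, 0 ≤ c i) → c ≠ 0 →
      sSup {u | u ∈ Θ ∧
          f u ≤ (∑ i, c i * p (x i) * φ (x i)) / (∑ i, c i * p (x i))} ∈ Θ ∧
      (∀ t ∈ Θ, t < sSup {u | u ∈ Θ ∧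
          f u ≤ (∑ i, c i * p (x i) * φ (x i)) / (∑ i, c i * p (x i))} →
        0 < ∑ i, c i * ψ (x i) t) ∧
      (∀ t ∈ Θ, sSup {u | u ∈ Θ ∧
          f u ≤ (∑ i, c i * p (x i) * φ (x i)) / (∑ i, c i * p (x i))} < t →
        ∑ i, c i * ψ (x i) t < 0) := by
  intro n hn x c hc hc0
  set S := ∑ i, c i * p (x i) with hS
  have hSpos : 0 < S := by
    obtain ⟨j, hj⟩ : ∃ j, c j ≠ 0 := by
      by_contra h
      push_neg at h
      exact hc0 (funext h)
    refine Finset.sum_pos' (fun i _ => mul_nonneg (hc i) (hp (x i)).le) ⟨j, Finset.mem_univ j, ?_⟩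
    exact mul_pos (lt_of_le_of_ne (hc j) (Ne.symm hj)) (hp (x j))
  set y := (∑ i, c i * p (x i) * φ (x i)) / S with hy
  -- y is a convex combination of the φ (x i)
  have hymem : y ∈ convexHull ℝ (f '' Θ) := by
    have := (convex_convexHull ℝ (f '' Θ)).sum_mem (t := Finset.univ)
      (w := fun i => c i * p (x i) / S) (z := fun i => φ (x i))
      (fun i _ => div_nonneg (mul_nonneg (hc i) (hp (x i)).le) hSpos.le)
      (by rw [← Finset.sum_div, div_self hSpos.ne'])
      (fun i _ => hφ (x i))
    convert this using 1
    rw [hy, Finset.sum_div]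
    exact Finset.sum_congr rfl fun i _ => by rw [smul_eq_mul]; ring
  obtain ⟨fa, ⟨a, ha, rfl⟩, fb, ⟨b, hb, rfl⟩, hay, hyb⟩ := convexHull_between hymem
  set A := {u | u ∈ Θ ∧ f u ≤ y} with hA
  have hane : a ∈ A := ⟨ha, hay⟩
  have hbdd : ∀ u ∈ A, u ≤ b := by
    rintro u ⟨hu, huy⟩
    by_contra h
    push_neg at h
    exact absurd (hf hb hu h) (not_lt.2 (le_trans huy hyb))
  have hbddA : BddAbove A := ⟨b, hbdd⟩
  have hAne : A.Nonempty := ⟨a, hane⟩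
  have hsup_mem : sSup A ∈ Θ :=
    hconn.out ha hb ⟨le_csSup hbddA hane, csSup_le hAne hbdd⟩
  have hsum : ∀ t, ∑ i, c i * ψ (x i) t = S * (y - f t) := by
    intro t
    have : ∑ i, c i * ψ (x i) t
        = (∑ i, c i * p (x i) * φ (x i)) - f t * S := by
      rw [hS, Finset.mul_sum, ← Finset.sum_sub_distrib]
      exact Finset.sum_congr rfl fun i _ => by rw [hψ]; ring
    rw [this, hy]
    field_simp
  refine ⟨hsup_mem, ?_, ?_⟩
  · intro t ht hlt
    obtain ⟨u, hu, htu⟩ := exists_lt_of_lt_csSup hAne hlt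
    have : f t < y := lt_of_lt_of_le (hf ht hu.1 htu) hu.2
    rw [hsum]
    exact mul_pos hSpos (by linarith)
  · intro t ht hlt
    have hnt' : t ∉ A := fun hmem => absurd (le_csSup hbddA hmem) (not_le.2 hlt)
    have : y < f t := by
      by_contra h
      push_neg at h
      exact hnt' ⟨ht, h⟩
    rw [hsum]
    exact mul_neg_of_pos_of_neg hSpos (by linarith)
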